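/- Fix all powers p_k for k ≠ i. The single-user energy efficiency η_i(p_i) = B·log₂(1 + c·p_i)/(p_i + P_c), with c > 0 and P_c > 0, is quasi-concave in p_i on [0, ∞) and has a unique maximizer. -/

import Mathlib

open Real Set Filter

-- concavity of the numerator
lemma aux_log_concave (c : ℝ) (hc : 0 < c) :
    ConcaveOn ℝ (Set.Ici 0) (fun x : ℝ => Real.log (1 + c * x)) := by
  have h := strictConcaveOn_log_Ioi.concaveOn.comp_affineMap (AffineMap.lineMap (1:ℝ) (1+c))
  have hsub : (Set.Ici (0:ℝ)) ⊆ (AffineMap.lineMap (1:ℝ) (1+c)) ⁻¹' (Set.Ioi 0) := by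
    intro x hx
    simp only [Set.mem_preimage, AffineMap.lineMap_apply, Set.mem_Ioi, smul_eq_mul,
      vsub_eq_sub, vadd_eq_add]
    simp only [Set.mem_Ici] at hx
    nlinarith
  have h2 := h.subset hsub (convex_Ici 0)
  convert h2 using 1
  · rfl
  · rfl
  · rfl
  · rfl
  · rfl
  funext x
  simp [AffineMap.lineMap_apply, Function.comp]
  ring_nf

lemma aux_num_concave (B c : ℝ) (hB : 0 < B) (hc : 0 < c) :
    ConcaveOn ℝ (Set.Ici 0) (fun x : ℝ => B * Real.logb 2 (1 + c * x)) := by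
  have hlog2 : (0:ℝ) < Real.log 2 := Real.log_pos one_lt_two
  have h := (aux_log_concave c hc).smul (c := B / Real.log 2) (by positivity)
  convert h using 1
  · rfl
  · rfl
  funext x
  simp only [smul_eq_mul, Real.logb]
  ring

lemma aux_superlevel_concave (B c r : ℝ) (hB : 0 < B) (hc : 0 < c) :
    ConcaveOn ℝ (Set.Ici 0) (fun x : ℝ => B * Real.logb 2 (1 + c * x) - r * x) := by
  have hlin : ConvexOn ℝ (Set.Ici 0) (fun x : ℝ => r * x) := by
    have := (r • (LinearMap.id : ℝ →ₗ[ℝ] ℝ)).convexOn (convex_Ici (0:ℝ))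
    exact this
  exact (aux_num_concave B c hB hc).sub hlin

lemma aux_quasi (B c Pc : ℝ) (hB : 0 < B) (hc : 0 < c) (hPc : 0 < Pc) :
    QuasiconcaveOn ℝ (Set.Ici 0)
        (fun p : ℝ => B * Real.logb 2 (1 + c * p) / (p + Pc)) := by
  intro r
  have hset : {x ∈ Set.Ici (0:ℝ) | r ≤ B * Real.logb 2 (1 + c * x) / (x + Pc)}
      = {x ∈ Set.Ici (0:ℝ) | r * Pc ≤ B * Real.logb 2 (1 + c * x) - r * x} := by
    ext x
    simp only [Set.mem_setOf_eq, Set.mem_Ici]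
    constructor
    · rintro ⟨hx, h⟩
      refine ⟨hx, ?_⟩
      rw [le_div_iff₀ (by linarith)] at h
      linarith
    · rintro ⟨hx, h⟩
      refine ⟨hx, ?_⟩
      rw [le_div_iff₀ (by linarith)]
      linarith
  rw [hset]
  exact (aux_superlevel_concave B c r hB hc).convex_ge (r * Pc)

lemma aux_cont (B c Pc : ℝ) (hc : 0 < c) (hPc : 0 < Pc) :
    ContinuousOn (fun p : ℝ => B * Real.logb 2 (1 + c * p) / (p + Pc)) (Set.Ici 0) := by
  apply ContinuousOn.div
  · apply ContinuousOn.mul continuousOn_const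
    have : ContinuousOn (fun p : ℝ => Real.log (1 + c * p)) (Set.Ici 0) := by
      apply Real.continuousOn_log.comp (by fun_prop)
      intro x hx
      simp only [Set.mem_Ici] at hx
      simp only [Set.mem_compl_iff, Set.mem_singleton_iff]
      nlinarith
    have heq : (fun p : ℝ => Real.logb 2 (1 + c * p))
        = fun p : ℝ => Real.log (1 + c * p) / Real.log 2 := by
      funext p; rw [Real.logb]
    rw [heq]
    exact this.div_const _
  · fun_prop
  · intro x hx
    simp only [Set.mem_Ici] at hx
    positivity

lemma aux_tendsto (B c Pc : ℝ) (hB : 0 < B) (hc : 0 < c) (hPc : 0 < Pc) :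
    Tendsto (fun p : ℝ => (B / Real.log 2) * (c + 1) * (Real.log (1 + c * p) / (1 + c * p)))
      atTop (nhds 0) := by
  have h1 : Tendsto (fun p : ℝ => 1 + c * p) atTop atTop :=
    tendsto_atTop_add_const_left _ 1 (Tendsto.const_mul_atTop hc tendsto_id)
  have h2 : Tendsto (fun x : ℝ => Real.log x / x) atTop (nhds 0) :=
    Real.isLittleO_log_id_atTop.tendsto_div_nhds_zero
  have h3 := (h2.comp h1).const_mul ((B / Real.log 2) * (c + 1))
  simpa using h3

/-- Single-user energy efficiency is quasi-concave with a unique maximizer. -/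
theorem single_user_ee_quasiconcave (B c Pc : ℝ) (hB : 0 < B) (hc : 0 < c) (hPc : 0 < Pc) :
    QuasiconcaveOn ℝ (Set.Ici 0)
        (fun p : ℝ => B * Real.logb 2 (1 + c * p) / (p + Pc)) ∧
      ∃! pstar : ℝ, pstar ∈ Set.Ici (0 : ℝ) ∧
        IsMaxOn (fun p : ℝ => B * Real.logb 2 (1 + c * p) / (p + Pc)) (Set.Ici 0) pstar := by
  set η : ℝ → ℝ := fun p : ℝ => B * Real.logb 2 (1 + c * p) / (p + Pc) with hη
  have hs : (0:ℝ) < Real.log 2 := Real.log_pos one_lt_two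
  refine ⟨aux_quasi B c Pc hB hc hPc, ?_⟩
  -- η 1 > 0
  have hK : 0 < η 1 := by
    rw [hη]
    have h1 : 0 < Real.logb 2 (1 + c * 1) :=
      Real.logb_pos one_lt_two (by nlinarith)
    positivity
  -- eventually η p < η 1
  have hev : ∀ᶠ p in atTop, η p < η 1 := by
    have hlt := (aux_tendsto B c Pc hB hc hPc).eventually_lt_const hK
    filter_upwards [hlt, eventually_ge_atTop (1:ℝ)] with p hφ hp1
    refine lt_of_le_of_lt ?_ hφ
    have hcp : (0:ℝ) < 1 + c * p := by nlinarith
    have hL : 0 ≤ Real.log (1 + c * p) := Real.log_nonneg (by nlinarith)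
    have key : Real.log (1 + c * p) / (p + Pc)
        ≤ ((c + 1) * Real.log (1 + c * p)) / (1 + c * p) := by
      rw [div_le_div_iff₀ (by linarith) hcp]
      have hfac : 1 + c * p ≤ (c + 1) * (p + Pc) := by nlinarith
      nlinarith [mul_le_mul_of_nonneg_left hfac hL]
    have heq : η p = (B / Real.log 2) * (Real.log (1 + c * p) / (p + Pc)) := by
      rw [hη]; simp only [Real.logb]; ring
    rw [heq]
    have h2 := mul_le_mul_of_nonneg_left key (le_of_lt (div_pos hB hs))
    calc (B / Real.log 2) * (Real.log (1 + c * p) / (p + Pc))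
        ≤ (B / Real.log 2) * (((c + 1) * Real.log (1 + c * p)) / (1 + c * p)) := h2
      _ = (B / Real.log 2) * (c + 1) * (Real.log (1 + c * p) / (1 + c * p)) := by ring
  -- existence of max
  obtain ⟨M, hM⟩ := eventually_atTop.1 hev
  set M' : ℝ := max M 1 with hM'
  have hM1 : (1:ℝ) ≤ M' := le_max_right _ _
  have h0M : (0:ℝ) ≤ M' := by linarith
  obtain ⟨pstar, hpmem, hmax⟩ :=
    (isCompact_Icc (a := (0:ℝ)) (b := M')).exists_isMaxOn ⟨0, by simp [h0M]⟩
      ((aux_cont B c Pc hc hPc).mono Set.Icc_subset_Ici_self)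
  have h1mem : (1:ℝ) ∈ Set.Icc (0:ℝ) M' := ⟨by norm_num, hM1⟩
  have hmaxIci : IsMaxOn η (Set.Ici 0) pstar := by
    intro p hp
    by_cases hpM : p ≤ M'
    · exact hmax ⟨hp, hpM⟩
    · have hpM2 : M ≤ p := le_trans (le_max_left M 1) (le_of_lt (not_le.1 hpM))
      have h1 : η 1 ≤ η pstar := hmax h1mem
      have h2 : η p < η 1 := hM p hpM2
      simp only [Set.mem_setOf_eq]
      linarith
  refine ⟨pstar, ⟨hpmem.1, hmaxIci⟩, ?_⟩
  -- uniqueness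
  rintro q ⟨hq0, hqmax⟩
  by_contra hne
  have hps0 : pstar ∈ Set.Ici (0:ℝ) := hpmem.1
  have heqval : η q = η pstar := le_antisymm (hmaxIci hq0) (hqmax hps0)
  set m : ℝ := (q + pstar) / 2 with hm
  have hm0 : m ∈ Set.Ici (0:ℝ) := by
    simp only [Set.mem_Ici] at hq0 hps0 ⊢
    rw [hm]; linarith
  have hxq : (0:ℝ) < 1 + c * q := by simp only [Set.mem_Ici] at hq0; nlinarith
  have hxp : (0:ℝ) < 1 + c * pstar := by simp only [Set.mem_Ici] at hps0; nlinarith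
  have hxy : 1 + c * q ≠ 1 + c * pstar := by
    intro h; apply hne; exact mul_left_cancel₀ hc.ne' (add_left_cancel h)
  have hsc := strictConcaveOn_log_Ioi.2 (Set.mem_Ioi.2 hxq) (Set.mem_Ioi.2 hxp) hxy
    (by norm_num : (0:ℝ) < 1/2) (by norm_num : (0:ℝ) < 1/2) (by norm_num)
  simp only [smul_eq_mul] at hsc
  have harg : (1:ℝ)/2 * (1 + c * q) + 1/2 * (1 + c * pstar) = 1 + c * m := by
    rw [hm]; ring
  rw [harg] at hsc
  -- turn into logb form
  have hsc2 : Real.logb 2 (1 + c * q) / 2 + Real.logb 2 (1 + c * pstar) / 2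
      < Real.logb 2 (1 + c * m) := by
    simp only [Real.logb]
    have h' : (1 / 2 * Real.log (1 + c * q) + 1 / 2 * Real.log (1 + c * pstar)) / Real.log 2
        < Real.log (1 + c * m) / Real.log 2 := (div_lt_div_iff_of_pos_right hs).2 hsc
    have heq2 : (1 / 2 * Real.log (1 + c * q) + 1 / 2 * Real.log (1 + c * pstar)) / Real.log 2
        = Real.log (1 + c * q) / Real.log 2 / 2 + Real.log (1 + c * pstar) / Real.log 2 / 2 := by
      ring
    linarith [heq2 ▸ h']
  have hqeq : B * Real.logb 2 (1 + c * q) = η pstar * (q + Pc) := by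
    have hqPc : q + Pc ≠ 0 := by simp only [Set.mem_Ici] at hq0; positivity
    have : η q * (q + Pc) = B * Real.logb 2 (1 + c * q) := by
      rw [hη]; field_simp
    rw [← heqval, this]
  have hpeq : B * Real.logb 2 (1 + c * pstar) = η pstar * (pstar + Pc) := by
    have hpPc : pstar + Pc ≠ 0 := by simp only [Set.mem_Ici] at hps0; positivity
    rw [hη]; field_simp
  have hmPc : (0:ℝ) < m + Pc := by simp only [Set.mem_Ici] at hm0; linarith
  have hfinal : η pstar < η m := by
    rw [hη]
    show η pstar < B * Real.logb 2 (1 + c * m) / (m + Pc)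
    rw [lt_div_iff₀ hmPc]
    have hsum : η pstar * (m + Pc) * 2 = η pstar * (q + Pc) + η pstar * (pstar + Pc) := by
      rw [hm]; ring
    nlinarith [mul_lt_mul_of_pos_left hsc2 hB, hqeq, hpeq, hsum]
  have := hmaxIci hm0
  simp only [Set.mem_setOf_eq] at this
  linarith
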